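/- For any tuples of permutations α, β ∈ (S_n)^n (each an n-tuple of permutations of {0,...,n-1}), the operator U_{α,β} = Σ_{i,j=0}^{n-1} e_i e_j^* ⊗ e_{α_i(j)} e_{β_j(i)}^* on ℂ^n ⊗ ℂ^n is unitary. -/

import Mathlib

open Matrix Kronecker

def realign {n m : ℕ} (X : Matrix (Fin n × Fin m) (Fin n × Fin m) ℂ) :
    Matrix (Fin n × Fin n) (Fin m × Fin m) ℂ :=
  Matrix.of fun p q => X (p.1, q.1) (p.2, q.2)

noncomputable def osr {n m : ℕ} (X : Matrix (Fin n × Fin m) (Fin n × Fin m) ℂ) : ℕ :=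
  (realign X).rank

def permU {n : ℕ} (α β : Fin n → Equiv.Perm (Fin n)) :
    Matrix (Fin n × Fin n) (Fin n × Fin n) ℂ :=
  Matrix.of fun p q => if p.2 = α p.1 q.1 ∧ q.2 = β q.1 p.1 then 1 else 0

def Npairs {n : ℕ} (α β : Fin n → Equiv.Perm (Fin n)) : ℕ :=
  (Finset.image (fun ij : Fin n × Fin n => ((α ij.1) ij.2, (β ij.2) ij.1))
    Finset.univ).card

/-- The underlying permutation of `permU`. -/
def permUEquiv {n : ℕ} (α β : Fin n → Equiv.Perm (Fin n)) :
    Equiv.Perm (Fin n × Fin n) where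
  toFun p := ((α p.1)⁻¹ p.2, β ((α p.1)⁻¹ p.2) p.1)
  invFun q := ((β q.1)⁻¹ q.2, α ((β q.1)⁻¹ q.2) q.1)
  left_inv p := by simp
  right_inv q := by simp

lemma permU_eq {n : ℕ} (α β : Fin n → Equiv.Perm (Fin n)) :
    permU α β = (permUEquiv α β).permMatrix ℂ := by
  ext p q
  simp only [permU, Matrix.of_apply, Equiv.Perm.permMatrix, PEquiv.toMatrix_apply,
    Equiv.toPEquiv_apply, Option.mem_def, Option.some_inj, permUEquiv, Equiv.coe_fn_mk]
  congr 1
  rw [eq_iff_iff]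
  constructor
  · rintro ⟨h1, h2⟩
    rw [Prod.ext_iff]
    constructor
    · simp [h1]
    · simp [h1, h2]
  · rintro rfl
    simp
  
lemma permMatrix_unitary {m : Type*} [Fintype m] [DecidableEq m] (σ : Equiv.Perm m) :
    σ.permMatrix ℂ ∈ Matrix.unitaryGroup m ℂ := by
  have hstar : star (σ.permMatrix ℂ) = σ⁻¹.permMatrix ℂ := by
    ext i j
    simp [Equiv.Perm.permMatrix, PEquiv.toMatrix_apply, conjTranspose_apply,
      ← Equiv.toPEquiv_symm, Equiv.toPEquiv_apply, Equiv.eq_symm_apply, eq_comm,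
      apply_ite (star : ℂ → ℂ)]
  rw [Matrix.mem_unitaryGroup_iff', hstar]
  rw [Equiv.Perm.permMatrix, Equiv.Perm.permMatrix, ← PEquiv.toMatrix_trans,
    ← Equiv.toPEquiv_trans]
  rw [show (σ⁻¹ : Equiv.Perm m) = σ.symm from rfl, Equiv.symm_trans_self,
    Equiv.toPEquiv_refl, PEquiv.toMatrix_refl]

theorem stmt4 {n : ℕ} (α β : Fin n → Equiv.Perm (Fin n)) :
    permU α β ∈ Matrix.unitaryGroup (Fin n × Fin n) ℂ := by
  rw [permU_eq]
  exact permMatrix_unitary _
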